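/- If a node u in layer i of an MDD has all outgoing edges pointing to the same node c and the set of values labeling its outgoing edges equals the full current domain D_i, then replacing u and its outgoing edges by redirecting each incoming edge (p,u) into a long edge (p,c) (skipping layer i, preserving the incoming edge's label) does not change the set of solutions with respect to the current domains. -/

import Mathlib

/-- A path in a labeled multigraph: `Reaches E u Q w` means the list of edges `Q`
(each edge a triple (source, value label, destination)) forms a path from `u` to `w`. -/
inductive Reaches {V : Type} (E : Finset (V × ℕ × V)) : V → List (V × ℕ × V) → V → Prop
  | nil (u : V) : Reaches E u [] u
  | cons {u c w : V} {v : ℕ} {Q : List (V × ℕ × V)} :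
      (u, v, c) ∈ E → Reaches E c Q w → Reaches E u ((u, v, c) :: Q) w

/-- The set of solutions of an MDD with long-edge semantics: a full assignment
`ρ` (with `ρ i ∈ D i` for `1 ≤ i ≤ n`) is a solution iff there is a root-to-terminal
path `Q` such that for each layer `i` either some edge of `Q` leaves layer `i` with
label `ρ i`, or `i` is earlier than the root's layer, or some (long) edge of `Q`
strictly skips layer `i`. -/
def Sols {V : Type} (n : ℕ) (D : ℕ → Finset ℕ) (E : Finset (V × ℕ × V))
    (layer : V → ℕ) (root terminal : V) : Set (ℕ → ℕ) :=
  { ρ | (∀ i ∈ Finset.Icc 1 n, ρ i ∈ D i) ∧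
    ∃ Q, Reaches E root Q terminal ∧
      ∀ i ∈ Finset.Icc 1 n,
        (∃ e ∈ Q, layer e.1 = i ∧ e.2.1 = ρ i) ∨ i < layer root ∨
        (∃ e ∈ Q, layer e.1 < i ∧ i < layer e.2.2) }

def Supp {V : Type} (layer : V → ℕ) (Q : List (V × ℕ × V)) (i v : ℕ) : Prop :=
  (∃ e ∈ Q, layer e.1 = i ∧ e.2.1 = v) ∨ (∃ e ∈ Q, layer e.1 < i ∧ i < layer e.2.2)

lemma supp_cons {V : Type} (layer : V → ℕ) (e : V × ℕ × V) (Q : List (V × ℕ × V)) (i v : ℕ) :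
    Supp layer (e :: Q) i v ↔
      ((layer e.1 = i ∧ e.2.1 = v) ∨ (layer e.1 < i ∧ i < layer e.2.2)) ∨ Supp layer Q i v := by
  simp only [Supp, List.mem_cons]
  constructor
  · rintro (⟨f, (rfl | hf), h1, h2⟩ | ⟨f, (rfl | hf), h1, h2⟩)
    · exact Or.inl (Or.inl ⟨h1, h2⟩)
    · exact Or.inr (Or.inl ⟨f, hf, h1, h2⟩)
    · exact Or.inl (Or.inr ⟨h1, h2⟩)
    · exact Or.inr (Or.inr ⟨f, hf, h1, h2⟩)
  · rintro ((⟨h1, h2⟩ | ⟨h1, h2⟩) | (⟨f, hf, h1, h2⟩ | ⟨f, hf, h1, h2⟩))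
    · exact Or.inl ⟨e, Or.inl rfl, h1, h2⟩
    · exact Or.inr ⟨e, Or.inl rfl, h1, h2⟩
    · exact Or.inl ⟨f, Or.inr hf, h1, h2⟩
    · exact Or.inr ⟨f, Or.inr hf, h1, h2⟩

lemma Reaches.nil_inv {V : Type} {E : Finset (V × ℕ × V)} {x y : V}
    (h : Reaches E x [] y) : x = y := by cases h; rfl

lemma Reaches.cons_inv {V : Type} {E : Finset (V × ℕ × V)} {x y : V} {e : V × ℕ × V}
    {Q : List (V × ℕ × V)} (h : Reaches E x (e :: Q) y) :
    e.1 = x ∧ e ∈ E ∧ Reaches E e.2.2 Q y := by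
  cases h
  exact ⟨rfl, ‹_›, ‹_›⟩

lemma Reaches.cons' {V : Type} {E : Finset (V × ℕ × V)} {y : V} {e : V × ℕ × V}
    {Q : List (V × ℕ × V)} (h : e ∈ E) (h2 : Reaches E e.2.2 Q y) :
    Reaches E e.1 (e :: Q) y := by
  obtain ⟨a, b, c⟩ := e
  exact Reaches.cons h h2

section
variable {V : Type} [DecidableEq V]

lemma fwd (E₁ : Finset (V × ℕ × V)) (layer : V → ℕ) (terminal u c : V)
    (huc : u ≠ c) (hterminal : u ≠ terminal)
    (hlt : ∀ e ∈ E₁, layer e.1 < layer e.2.2)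
    (hallc : ∀ e ∈ E₁, e.1 = u → e.2.2 = c)
    (E₂ : Finset (V × ℕ × V))
    (hE₂ : E₂ = (E₁.filter fun e => e.1 ≠ u ∧ e.2.2 ≠ u) ∪
      ((E₁.filter fun e => e.2.2 = u).image fun e => (e.1, e.2.1, c))) :
    ∀ N (Q : List (V × ℕ × V)), Q.length ≤ N → ∀ x, Reaches E₁ x Q terminal → x ≠ u →
      ∃ Q', Reaches E₂ x Q' terminal ∧ ∀ i v, Supp layer Q i v → Supp layer Q' i v := by
  intro N
  induction N with
  | zero =>
    intro Q hQ x h _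
    have hQe : Q = [] := List.length_eq_zero_iff.mp (Nat.le_zero.mp hQ)
    subst hQe
    obtain rfl := h.nil_inv
    exact ⟨[], Reaches.nil _, fun i v hs => hs⟩
  | succ N ih =>
    intro Q hQ x h hx
    match Q, h with
    | [], h =>
      obtain rfl := h.nil_inv
      exact ⟨[], Reaches.nil _, fun i v hs => hs⟩
    | e :: Q₀, h =>
      obtain ⟨hp, hmem, hrest⟩ := h.cons_inv
      by_cases hy : e.2.2 = u
      · match Q₀, hrest with
        | [], hrest => exact absurd (hy ▸ hrest.nil_inv) hterminal
        | f :: Q₁, hrest =>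
          obtain ⟨hq, hmem₂, hrest₂⟩ := hrest.cons_inv
          have hq' : f.1 = u := hq.trans hy
          have hz : f.2.2 = c := hallc f hmem₂ hq'
          obtain ⟨Q₂', hR', hS'⟩ := ih Q₁ (by simp at hQ; omega) f.2.2 hrest₂
            (by rw [hz]; exact Ne.symm huc)
          have hmemE₂ : (x, e.2.1, c) ∈ E₂ := by
            rw [hE₂]
            apply Finset.mem_union_right
            apply Finset.mem_image.mpr
            exact ⟨e, Finset.mem_filter.mpr ⟨hmem, hy⟩, by rw [hp]⟩
          have l1 : layer x < layer u := by
            have := hlt e hmem; rw [hp, hy] at this; exact this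
          have l2 : layer u < layer c := by
            have := hlt f hmem₂; rw [hq', hz] at this; exact this
          refine ⟨(x, e.2.1, c) :: Q₂', Reaches.cons hmemE₂ (hz ▸ hR'), ?_⟩
          intro i v hs
          rw [supp_cons, supp_cons] at hs
          rw [supp_cons]
          simp only [hp, hy, hq', hz] at hs
          rcases hs with (⟨h1, h2⟩ | ⟨h1, h2⟩) | ((⟨h1, h2⟩ | ⟨h1, h2⟩) | htail)
          · exact Or.inl (Or.inl ⟨h1, h2⟩)
          · exact Or.inl (Or.inr ⟨h1, h2.trans l2⟩)
          · exact Or.inl (Or.inr ⟨h1 ▸ l1, h1 ▸ l2⟩)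
          · exact Or.inl (Or.inr ⟨l1.trans h1, h2⟩)
          · exact Or.inr (hS' i v htail)
      · obtain ⟨Q₀', hR', hS'⟩ := ih Q₀ (by simp at hQ; omega) e.2.2 hrest hy
        have hmemE₂ : e ∈ E₂ := by
          rw [hE₂]
          apply Finset.mem_union_left
          exact Finset.mem_filter.mpr ⟨hmem, by rw [hp]; exact hx, hy⟩
        refine ⟨e :: Q₀', hp ▸ Reaches.cons' hmemE₂ hR', ?_⟩
        intro i v hs
        rw [supp_cons] at hs ⊢
        rcases hs with h1 | h2
        · exact Or.inl h1
        · exact Or.inr (hS' i v h2)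

end

section
variable {V : Type} [DecidableEq V]

lemma bwd (E₁ : Finset (V × ℕ × V)) (layer : V → ℕ) (u c : V)
    (hlt : ∀ e ∈ E₁, layer e.1 < layer e.2.2)
    (v : ℕ) (hv : (u, v, c) ∈ E₁)
    (E₂ : Finset (V × ℕ × V))
    (hE₂ : E₂ = (E₁.filter fun e => e.1 ≠ u ∧ e.2.2 ≠ u) ∪
      ((E₁.filter fun e => e.2.2 = u).image fun e => (e.1, e.2.1, c))) :
    ∀ x (Q : List (V × ℕ × V)) y, Reaches E₂ x Q y →
      ∃ Q', Reaches E₁ x Q' y ∧ ∀ i w, Supp layer Q i w →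
        Supp layer Q' i w ∨ (i = layer u ∧ (u, v, c) ∈ Q') := by
  intro x Q y h
  induction h with
  | nil z => exact ⟨[], Reaches.nil _, fun i w hs => by simp [Supp] at hs⟩
  | @cons a b y' lab Q₀ hE hrest ih =>
    obtain ⟨Q', hR', hS'⟩ := ih
    rw [hE₂] at hE
    rcases Finset.mem_union.mp hE with hE | hE
    · obtain ⟨hE1, -⟩ := Finset.mem_filter.mp hE
      refine ⟨(a, lab, b) :: Q', Reaches.cons hE1 hR', ?_⟩
      intro i w hs
      rw [supp_cons] at hs
      rcases hs with hhead | htail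
      · exact Or.inl ((supp_cons _ _ _ _ _).mpr (Or.inl hhead))
      · rcases hS' i w htail with hs | ⟨hi, hm⟩
        · exact Or.inl ((supp_cons _ _ _ _ _).mpr (Or.inr hs))
        · exact Or.inr ⟨hi, List.mem_cons_of_mem _ hm⟩
    · obtain ⟨f, hf, heq⟩ := Finset.mem_image.mp hE
      obtain ⟨hfE, hfu⟩ := Finset.mem_filter.mp hf
      have ha : f.1 = a := congrArg Prod.fst heq
      have hlab : f.2.1 = lab := congrArg (fun p => p.2.1) heq
      have hb : c = b := congrArg (fun p => p.2.2) heq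
      have e1 : (a, lab, u) ∈ E₁ := by
        have : (a, lab, u) = f := by
          rw [← ha, ← hlab, ← hfu]
        rw [this]; exact hfE
      have la : layer a < layer u := by
        have := hlt _ e1; simpa using this
      have lc : layer u < layer c := by
        have := hlt _ hv; simpa using this
      refine ⟨(a, lab, u) :: (u, v, c) :: Q', Reaches.cons e1 (Reaches.cons hv (hb ▸ hR')), ?_⟩
      intro i w hs
      rw [supp_cons] at hs
      simp only at hs
      rcases hs with (⟨h1, h2⟩ | ⟨h1, h2⟩) | htail
      · exact Or.inl (Or.inl ⟨(a, lab, u), List.mem_cons_self, h1, h2⟩)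
      · rcases lt_trichotomy i (layer u) with hi | hi | hi
        · exact Or.inl (Or.inr ⟨(a, lab, u), List.mem_cons_self, h1, hi⟩)
        · exact Or.inr ⟨hi, List.mem_cons_of_mem _ (List.mem_cons_self)⟩
        · exact Or.inl (Or.inr ⟨(u, v, c), List.mem_cons_of_mem _ (List.mem_cons_self), hi,
            hb ▸ h2⟩)
      · rcases hS' i w htail with hs | ⟨hi, hm⟩
        · rcases hs with ⟨g, hg, hgp⟩ | ⟨g, hg, hgp⟩
          · exact Or.inl (Or.inl ⟨g, List.mem_cons_of_mem _ (List.mem_cons_of_mem _ hg), hgp⟩)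
          · exact Or.inl (Or.inr ⟨g, List.mem_cons_of_mem _ (List.mem_cons_of_mem _ hg), hgp⟩)
        · exact Or.inr ⟨hi, List.mem_cons_of_mem _ (List.mem_cons_of_mem _ hm)⟩

end

/-- If a node `u` in layer `i` has all its outgoing edges pointing to the
same node `c` and the labels of those edges are exactly the full current domain `D i`,
then deleting `u` and its outgoing edges and turning every incoming edge `(p, w, u)` into
the long edge `(p, w, c)` (which now skips layer `i`, where a long edge supports every
current domain value of each skipped layer) does not change the set of solutions with
respect to the current domains. -/
theorem stmt14 {V : Type} [DecidableEq V] (n : ℕ) (D : ℕ → Finset ℕ)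
    (E₁ : Finset (V × ℕ × V)) (layer : V → ℕ) (root terminal : V)
    (u c : V) (huc : u ≠ c)
    (hroot : u ≠ root) (hterminal : u ≠ terminal)
    (hlt : ∀ e ∈ E₁, layer e.1 < layer e.2.2)
    (hDne : (D (layer u)).Nonempty)
    (hallc : ∀ e ∈ E₁, e.1 = u → e.2.2 = c)
    (hfull : ∀ w : ℕ, (u, w, c) ∈ E₁ ↔ w ∈ D (layer u))
    (E₂ : Finset (V × ℕ × V))
    (hE₂ : E₂ = (E₁.filter fun e => e.1 ≠ u ∧ e.2.2 ≠ u) ∪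
      ((E₁.filter fun e => e.2.2 = u).image fun e => (e.1, e.2.1, c))) :
    Sols n D E₂ layer root terminal = Sols n D E₁ layer root terminal := by
  ext ρ
  simp only [Sols, Set.mem_setOf_eq]
  constructor
  · rintro ⟨hdom, Q, hR, hsup⟩
    refine ⟨hdom, ?_⟩
    set v : ℕ := if h : layer u ∈ Finset.Icc 1 n then ρ (layer u) else hDne.choose with hvdef
    have hvD : v ∈ D (layer u) := by
      rw [hvdef]
      split
      · exact hdom _ ‹_›
      · exact hDne.choose_spec
    have hv : (u, v, c) ∈ E₁ := (hfull v).mpr hvD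
    obtain ⟨Q', hR', hS'⟩ := bwd E₁ layer u c hlt v hv E₂ hE₂ root Q terminal hR
    refine ⟨Q', hR', ?_⟩
    intro i hi
    have key : Supp layer Q i (ρ i) →
        (∃ e ∈ Q', layer e.1 = i ∧ e.2.1 = ρ i) ∨ (∃ e ∈ Q', layer e.1 < i ∧ i < layer e.2.2) := by
      intro hs
      rcases hS' i (ρ i) hs with hs' | ⟨hiu, hm⟩
      · exact hs'
      · refine Or.inl ⟨(u, v, c), hm, by simp [hiu], ?_⟩
        show v = ρ i
        rw [hvdef, dif_pos (hiu ▸ hi), hiu]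
    rcases hsup i hi with hw | hr | hskip
    · rcases key (Or.inl hw) with h | h
      · exact Or.inl h
      · exact Or.inr (Or.inr h)
    · exact Or.inr (Or.inl hr)
    · rcases key (Or.inr hskip) with h | h
      · exact Or.inl h
      · exact Or.inr (Or.inr h)
  · rintro ⟨hdom, Q, hR, hsup⟩
    refine ⟨hdom, ?_⟩
    obtain ⟨Q', hR', hS'⟩ := fwd E₁ layer terminal u c huc hterminal hlt hallc E₂ hE₂
      Q.length Q le_rfl root hR (Ne.symm hroot)
    refine ⟨Q', hR', ?_⟩
    intro i hi
    rcases hsup i hi with hw | hr | hskip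
    · rcases hS' i (ρ i) (Or.inl hw) with h | h
      · exact Or.inl h
      · exact Or.inr (Or.inr h)
    · exact Or.inr (Or.inl hr)
    · rcases hS' i (ρ i) (Or.inr hskip) with h | h
      · exact Or.inl h
      · exact Or.inr (Or.inr h)
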